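/- arXiv:1402.7235 — 2 statements merged into one kernel-verified Lean document; each statement's English description precedes it below -/
import Mathlib

section
/- Let n, m ≥ 2 and let ℓ ≥ 1 be odd. Then the number of ℓ-links of the complete bipartite graph K_{n,m} is n·m·((n−1)(m−1))^{(ℓ−1)/2}, and every ℓ-link can be extended in exactly n+m−2 ways to an (ℓ+1)-link having it as its initial segment or final segment; consequently the ℓ-link graph of K_{n,m} is (n+m−2)-regular. -/
/-- A multigraph: a type of vertices, a type of edges, and an incidence map
sending each edge to an unordered pair of vertices. -/
structure Multigraph (V E : Type) where
  inc : E → Sym2 V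

namespace Multigraph

variable {V E : Type}

/-- A multigraph is loopless if no edge joins a vertex to itself. -/
def Loopless (G : Multigraph V E) : Prop := ∀ e : E, ¬ (G.inc e).IsDiag

/-- A multigraph is simple if it is loopless and has no parallel edges. -/
def Simple (G : Multigraph V E) : Prop := G.Loopless ∧ Function.Injective G.inc

/-- The underlying simple graph of a multigraph. -/
def toSimple (G : Multigraph V E) : SimpleGraph V where
  Adj u v := u ≠ v ∧ ∃ e : E, G.inc e = s(u, v)
  symm := by
    refine ⟨?_⟩
    rintro u v ⟨huv, e, he⟩
    exact ⟨Ne.symm huv, e, by rw [he, Sym2.eq_swap]⟩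
  loopless := by refine ⟨?_⟩; rintro v ⟨h, _⟩; exact h rfl

/-- The degree of a vertex: the number of edges incident to it. -/
noncomputable def degree (G : Multigraph V E) (v : V) : ℕ := Nat.card {e : E // v ∈ G.inc e}

/-- The number of edges of a multigraph. -/
noncomputable def edgeCard (_G : Multigraph V E) : ℕ := Nat.card E

/-- An `ℓ`-arc (non-backtracking walk of length `ℓ`): an alternating sequence of
vertices and edges with consecutive edges distinct. -/
@[ext]
structure Arc (G : Multigraph V E) (ℓ : ℕ) where
  verts : Fin (ℓ + 1) → V
  edges : Fin ℓ → E
  inc_eq : ∀ i : Fin ℓ, G.inc (edges i) = s(verts i.castSucc, verts i.succ)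
  nb : ∀ i j : Fin ℓ, (i : ℕ) + 1 = (j : ℕ) → edges i ≠ edges j

variable {G : Multigraph V E}

/-- The reverse of an arc. -/
def Arc.reverse {ℓ : ℕ} (A : G.Arc ℓ) : G.Arc ℓ where
  verts i := A.verts i.rev
  edges i := A.edges i.rev
  inc_eq i := by
    show G.inc (A.edges i.rev) = s(A.verts i.castSucc.rev, A.verts i.succ.rev)
    rw [Fin.rev_castSucc, Fin.rev_succ, A.inc_eq i.rev, Sym2.eq_swap]
  nb i j hij h := by
    refine A.nb j.rev i.rev ?_ (h.symm)
    have hi := i.isLt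
    have hj := j.isLt
    simp only [Fin.val_rev]
    omega

lemma Arc.reverse_reverse {ℓ : ℕ} (A : G.Arc ℓ) : A.reverse.reverse = A := by
  ext i
  · show A.verts i.rev.rev = A.verts i
    rw [Fin.rev_rev]
  · show A.edges i.rev.rev = A.edges i
    rw [Fin.rev_rev]

/-- The length-`ℓ` prefix of an `(ℓ+1)`-arc. -/
def Arc.init {ℓ : ℕ} (A : G.Arc (ℓ + 1)) : G.Arc ℓ where
  verts i := A.verts i.castSucc
  edges i := A.edges i.castSucc
  inc_eq i := by
    show G.inc (A.edges i.castSucc) = s(A.verts i.castSucc.castSucc, A.verts i.succ.castSucc)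
    rw [A.inc_eq i.castSucc, Fin.succ_castSucc]
  nb i j hij h := A.nb i.castSucc j.castSucc (by simpa using hij) h

/-- The length-`ℓ` suffix of an `(ℓ+1)`-arc. -/
def Arc.tail {ℓ : ℕ} (A : G.Arc (ℓ + 1)) : G.Arc ℓ where
  verts i := A.verts i.succ
  edges i := A.edges i.succ
  inc_eq i := by
    show G.inc (A.edges i.succ) = s(A.verts i.castSucc.succ, A.verts i.succ.succ)
    rw [A.inc_eq i.succ, Fin.succ_castSucc]
  nb i j hij h := A.nb i.succ j.succ (by simpa using hij) h

lemma Arc.reverse_init {ℓ : ℕ} (A : G.Arc (ℓ + 1)) : A.reverse.init = A.tail.reverse := by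
  ext i
  · show A.verts (Fin.castSucc i).rev = A.verts i.rev.succ
    rw [Fin.rev_castSucc]
  · show A.edges (Fin.castSucc i).rev = A.edges i.rev.succ
    rw [Fin.rev_castSucc]

lemma Arc.reverse_tail {ℓ : ℕ} (A : G.Arc (ℓ + 1)) : A.reverse.tail = A.init.reverse := by
  ext i
  · show A.verts (Fin.succ i).rev = A.verts i.rev.castSucc
    rw [Fin.rev_succ]
  · show A.edges (Fin.succ i).rev = A.edges i.rev.castSucc
    rw [Fin.rev_succ]

/-- The reversal relation on arcs. -/
def LinkRel (G : Multigraph V E) {ℓ : ℕ} (A B : G.Arc ℓ) : Prop := B = A.reverse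

/-- An `ℓ`-link: an `ℓ`-arc up to reversal. -/
def Link (G : Multigraph V E) (ℓ : ℕ) : Type := Quot (G.LinkRel (ℓ := ℓ))

/-- The `ℓ`-link determined by an `ℓ`-arc. -/
def Link.mk {ℓ : ℕ} (A : G.Arc ℓ) : G.Link ℓ := Quot.mk (G.LinkRel) A

lemma Link.mk_reverse {ℓ : ℕ} (A : G.Arc ℓ) : (Link.mk A.reverse : G.Link ℓ) = Link.mk A :=
  (Quot.sound (show G.LinkRel A A.reverse from rfl)).symm

/-- The unordered pair of `ℓ`-links that are the two length-`ℓ` subsequences of an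
`(ℓ+1)`-link. -/
def linkEnds (G : Multigraph V E) {ℓ : ℕ} : G.Link (ℓ + 1) → Sym2 (G.Link ℓ) :=
  Quot.lift (fun A => s(Link.mk A.init, Link.mk A.tail)) (by
    rintro A B rfl
    show s(Link.mk A.init, Link.mk A.tail) = s(Link.mk A.reverse.init, Link.mk A.reverse.tail)
    rw [Arc.reverse_init, Arc.reverse_tail, Link.mk_reverse, Link.mk_reverse, Sym2.eq_swap])

/-- The `ℓ`-link graph of `G`: vertices are the `ℓ`-links, and for each
`(ℓ+1)`-link there is one edge joining its two length-`ℓ` subsequences. -/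
def linkGraph (G : Multigraph V E) (ℓ : ℕ) : Multigraph (G.Link ℓ) (G.Link (ℓ + 1)) where
  inc := G.linkEnds

/-- The set of edges used by an arc. -/
def Arc.edgeSet {ℓ : ℕ} (A : G.Arc ℓ) : Set E := Set.range A.edges

/-- The set of vertices used by an arc. -/
def Arc.vertSet {ℓ : ℕ} (A : G.Arc ℓ) : Set V := Set.range A.verts

lemma Arc.edgeSet_reverse {ℓ : ℕ} (A : G.Arc ℓ) : A.reverse.edgeSet = A.edgeSet := by
  ext e
  constructor
  · rintro ⟨i, rfl⟩; exact ⟨i.rev, rfl⟩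
  · rintro ⟨i, rfl⟩; exact ⟨i.rev, by show A.edges i.rev.rev = _; rw [Fin.rev_rev]⟩

lemma Arc.vertSet_reverse {ℓ : ℕ} (A : G.Arc ℓ) : A.reverse.vertSet = A.vertSet := by
  ext v
  constructor
  · rintro ⟨i, rfl⟩; exact ⟨i.rev, rfl⟩
  · rintro ⟨i, rfl⟩; exact ⟨i.rev, by show A.verts i.rev.rev = _; rw [Fin.rev_rev]⟩

/-- The set of edges used by a link. -/
def Link.edgeSet {ℓ : ℕ} : G.Link ℓ → Set E :=
  Quot.lift Arc.edgeSet (by rintro A B rfl; exact (Arc.edgeSet_reverse A).symm)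

/-- The set of vertices used by a link. -/
def Link.vertSet {ℓ : ℕ} : G.Link ℓ → Set V :=
  Quot.lift Arc.vertSet (by rintro A B rfl; exact (Arc.vertSet_reverse A).symm)

lemma Arc.tail_init_comm {ℓ : ℕ} (A : G.Arc (ℓ + 2)) : A.tail.init = A.init.tail := by
  ext i
  · show A.verts (Fin.castSucc i).succ = A.verts (Fin.succ i).castSucc
    rw [Fin.succ_castSucc]
  · show A.edges (Fin.castSucc i).succ = A.edges (Fin.succ i).castSucc
    rw [Fin.succ_castSucc]

/-- The middle `ℓ`-segment of an `(ℓ+2)`-arc, obtained by deleting the first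
and last edge. -/
def Arc.mid2 {ℓ : ℕ} (A : G.Arc (ℓ + 2)) : G.Arc ℓ := A.tail.init

lemma Arc.mid2_reverse {ℓ : ℕ} (A : G.Arc (ℓ + 2)) : A.reverse.mid2 = A.mid2.reverse := by
  show A.reverse.tail.init = A.tail.init.reverse
  rw [Arc.reverse_tail, Arc.reverse_init, Arc.tail_init_comm]

/-- The middle `ℓ`-segment of an `(ℓ+2)`-link. -/
def Link.mid2 {ℓ : ℕ} : G.Link (ℓ + 2) → G.Link ℓ :=
  Quot.lift (fun A => Link.mk A.mid2) (by
    rintro A B rfl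
    show Link.mk A.mid2 = Link.mk A.reverse.mid2
    rw [Arc.mid2_reverse, Link.mk_reverse])

/-- The middle unit of an arc: its middle vertex if its length is even, and its
middle edge if its length is odd. -/
def Arc.midUnit {ℓ : ℕ} (A : G.Arc ℓ) : V ⊕ E :=
  if h : Even ℓ then Sum.inl (A.verts ⟨ℓ / 2, by omega⟩)
  else Sum.inr (A.edges ⟨ℓ / 2, by
    have : ℓ % 2 = 1 := Nat.not_even_iff.mp h
    omega⟩)

lemma Arc.midUnit_reverse {ℓ : ℕ} (A : G.Arc ℓ) : A.reverse.midUnit = A.midUnit := by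
  by_cases h : Even ℓ
  · rw [Arc.midUnit, Arc.midUnit, dif_pos h, dif_pos h]
    have hk : ℓ % 2 = 0 := Nat.even_iff.mp h
    congr 1
    show A.verts (⟨ℓ / 2, _⟩ : Fin (ℓ + 1)).rev = A.verts _
    congr 1
    ext
    rw [Fin.val_rev]
    show ℓ + 1 - (ℓ / 2 + 1) = ℓ / 2
    omega
  · rw [Arc.midUnit, Arc.midUnit, dif_neg h, dif_neg h]
    have hk : ℓ % 2 = 1 := Nat.not_even_iff.mp h
    congr 1
    show A.edges (⟨ℓ / 2, _⟩ : Fin ℓ).rev = A.edges _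
    congr 1
    ext
    rw [Fin.val_rev]
    show ℓ - (ℓ / 2 + 1) = ℓ / 2
    omega

/-- The middle unit of a link: its middle vertex (even length) or middle edge
(odd length). -/
def Link.midUnit {ℓ : ℕ} : G.Link ℓ → V ⊕ E :=
  Quot.lift Arc.midUnit (by rintro A B rfl; exact (Arc.midUnit_reverse A).symm)

/-- `G` has a (nonnull) subgraph of minimum degree at least `d`. -/
def HasMinDegSubgraph (G : Multigraph V E) (d : ℕ) : Prop :=
  ∃ (V' : Set V) (E' : Set E), V'.Nonempty ∧ (∀ e ∈ E', ∀ v ∈ G.inc e, v ∈ V') ∧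
    ∀ v ∈ V', d ≤ Nat.card {e : E // e ∈ E' ∧ v ∈ G.inc e}

/-- The degeneracy of `G`: the maximum over subgraphs of the minimum degree. -/
noncomputable def degeneracy (G : Multigraph V E) : ℕ := sSup {d | G.HasMinDegSubgraph d}

/-- The edge-chromatic number of a multigraph: the least `t` such that the edges
can be `t`-coloured with edges sharing an endpoint getting distinct colours. -/
noncomputable def edgeChromaticNumber (G : Multigraph V E) : ℕ :=
  sInf {t | ∃ c : E → Fin t, ∀ e f : E, e ≠ f → (∃ v, v ∈ G.inc e ∧ v ∈ G.inc f) → c e ≠ c f}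

/-- The complete bipartite multigraph `K_{n,m}` (one edge for each pair). -/
def completeBipartiteMG (n m : ℕ) : Multigraph (Fin n ⊕ Fin m) (Fin n × Fin m) :=
  ⟨fun p => s(Sum.inl p.1, Sum.inr p.2)⟩

end Multigraph

/-- `H` contains a complete minor on `t` branch sets: `t` pairwise disjoint
nonempty connected subsets of vertices with an edge between every two of them. -/
def SimpleGraph.HasKMinor {W : Type} (H : SimpleGraph W) (t : ℕ) : Prop :=
  ∃ B : Fin t → Set W,
    (∀ i, (B i).Nonempty) ∧
    (∀ i, ((H.induce (B i)).Connected)) ∧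
    (∀ i j, i ≠ j → Disjoint (B i) (B j)) ∧
    (∀ i j, i ≠ j → ∃ u ∈ B i, ∃ v ∈ B j, H.Adj u v)


section CBAux

open Multigraph Sum

variable {n m : ℕ}

local notation "KG" => Multigraph.completeBipartiteMG n m

lemma KB_inc_inj : Function.Injective (Multigraph.completeBipartiteMG n m).inc := by
  rintro ⟨a, b⟩ ⟨c, d⟩ h
  simp only [Multigraph.completeBipartiteMG, Sym2.eq_iff] at h
  rcases h with ⟨h1, h2⟩ | ⟨h1, h2⟩ <;> simp_all

section ArcBasics

variable {ℓ : ℕ}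

lemma inc_eq' (A : (KG).Arc ℓ) (i : ℕ) (h : i < ℓ) :
    (KG).inc (A.edges ⟨i, h⟩) = s(A.verts ⟨i, by omega⟩, A.verts ⟨i + 1, by omega⟩) :=
  A.inc_eq ⟨i, h⟩

lemma nb' (A : (KG).Arc ℓ) (i : ℕ) (h : i + 1 < ℓ) :
    A.edges ⟨i, by omega⟩ ≠ A.edges ⟨i + 1, h⟩ :=
  A.nb ⟨i, by omega⟩ ⟨i + 1, h⟩ rfl

lemma edge_ends (A : (KG).Arc ℓ) (i : ℕ) (h : i < ℓ) :
    (A.verts ⟨i, by omega⟩ = inl (A.edges ⟨i, h⟩).1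
        ∧ A.verts ⟨i + 1, by omega⟩ = inr (A.edges ⟨i, h⟩).2)
    ∨ (A.verts ⟨i, by omega⟩ = inr (A.edges ⟨i, h⟩).2
        ∧ A.verts ⟨i + 1, by omega⟩ = inl (A.edges ⟨i, h⟩).1) := by
  have h0 := inc_eq' A i h
  rw [show (KG).inc (A.edges ⟨i, h⟩)
      = s(inl (A.edges ⟨i, h⟩).1, inr (A.edges ⟨i, h⟩).2) from rfl] at h0
  rw [Sym2.eq_iff] at h0
  tauto

lemma side_adj (A : (KG).Arc ℓ) (i : ℕ) (h : i < ℓ) :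
    (A.verts ⟨i + 1, by omega⟩).isLeft = !(A.verts ⟨i, by omega⟩).isLeft := by
  rcases edge_ends A i h with ⟨h1, h2⟩ | ⟨h1, h2⟩ <;> rw [h1, h2] <;> rfl

lemma side_parity (A : (KG).Arc ℓ) : ∀ (i : ℕ) (h : i < ℓ + 1),
    (A.verts ⟨i, h⟩).isLeft
      = if Even i then (A.verts ⟨0, Nat.succ_pos ℓ⟩).isLeft
        else !(A.verts ⟨0, Nat.succ_pos ℓ⟩).isLeft := by
  intro i
  induction i with
  | zero => intro h; simp
  | succ k ih =>
    intro h
    have hk : k < ℓ := by omega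
    rw [side_adj A k hk, ih (by omega)]
    by_cases he : Even k
    · simp [he, Nat.even_add_one]
    · simp [he, Nat.even_add_one]

lemma verts_ne (A : (KG).Arc ℓ) (i : ℕ) (h : i + 1 < ℓ) :
    A.verts ⟨i, by omega⟩ ≠ A.verts ⟨i + 2, by omega⟩ := by
  intro heq
  apply nb' A i h
  apply KB_inc_inj
  rw [inc_eq' A i (by omega), inc_eq' A (i + 1) h, heq]
  exact Sym2.eq_swap

lemma reverse_verts' (A : (KG).Arc ℓ) (i : ℕ) (h : i < ℓ + 1) :
    A.reverse.verts ⟨i, h⟩ = A.verts ⟨ℓ - i, by omega⟩ := by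
  show A.verts (Fin.rev ⟨i, h⟩) = _
  congr 1
  ext
  simp only [Fin.val_rev]
  omega

lemma reverse_edges' (A : (KG).Arc ℓ) (i : ℕ) (h : i < ℓ) :
    A.reverse.edges ⟨i, h⟩ = A.edges ⟨ℓ - 1 - i, by omega⟩ := by
  show A.edges (Fin.rev ⟨i, h⟩) = _
  congr 1
  ext
  simp only [Fin.val_rev]
  omega

lemma init_verts' (B : (KG).Arc (ℓ + 1)) (i : ℕ) (h : i < ℓ + 1) :
    B.init.verts ⟨i, h⟩ = B.verts ⟨i, by omega⟩ := rfl

lemma init_edges' (B : (KG).Arc (ℓ + 1)) (i : ℕ) (h : i < ℓ) :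
    B.init.edges ⟨i, h⟩ = B.edges ⟨i, by omega⟩ := rfl

lemma tail_verts' (B : (KG).Arc (ℓ + 1)) (i : ℕ) (h : i < ℓ + 1) :
    B.tail.verts ⟨i, h⟩ = B.verts ⟨i + 1, by omega⟩ := rfl

lemma tail_edges' (B : (KG).Arc (ℓ + 1)) (i : ℕ) (h : i < ℓ) :
    B.tail.edges ⟨i, h⟩ = B.edges ⟨i + 1, by omega⟩ := rfl

end ArcBasics

instance arcFinite {V E : Type} [Finite V] [Finite E] (G : Multigraph V E) (ℓ : ℕ) :
    Finite (G.Arc ℓ) := by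
  apply Finite.of_injective (fun A => (A.verts, A.edges))
  intro A B h
  simp only [Prod.mk.injEq] at h
  obtain ⟨h1, h2⟩ := h
  cases A; cases B
  simp_all

instance linkFinite {V E : Type} [Finite V] [Finite E] (G : Multigraph V E) (ℓ : ℕ) :
    Finite (G.Link ℓ) :=
  Finite.of_surjective (Quot.mk _) (fun q => Quot.exists_rep q)

lemma link_mk_eq_mk_iff {V E : Type} {G : Multigraph V E} {ℓ : ℕ} (A B : G.Arc ℓ) :
    Multigraph.Link.mk A = Multigraph.Link.mk B ↔ A = B ∨ A = B.reverse := by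
  show Quot.mk _ A = Quot.mk _ B ↔ _
  rw [Quot.eq]
  constructor
  · intro h
    induction h with
    | rel x y hxy => right; rw [hxy, Multigraph.Arc.reverse_reverse]
    | refl x => left; rfl
    | symm x y _ ih =>
      rcases ih with rfl | h
      · left; rfl
      · right; rw [h, Multigraph.Arc.reverse_reverse]
    | trans x y z _ _ ih1 ih2 =>
      rcases ih1 with rfl | h1
      · exact ih2
      · rcases ih2 with rfl | h2
        · right; exact h1
        · left; rw [h1, h2, Multigraph.Arc.reverse_reverse]
  · rintro (rfl | rfl)
    · exact Relation.EqvGen.refl _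
    · exact Relation.EqvGen.symm _ _ (Relation.EqvGen.rel _ _ rfl)

section Ext

variable [NeZero n] [NeZero m]

def mkEdge : (Fin n ⊕ Fin m) → (Fin n ⊕ Fin m) → Fin n × Fin m
  | inl a, inr b => (a, b)
  | inr b, inl a => (a, b)
  | inl a, inl _ => (a, 0)
  | inr b, inr _ => (0, b)

lemma inc_mkEdge (u v : Fin n ⊕ Fin m) (h : u.isLeft ≠ v.isLeft) :
    (KG).inc (mkEdge u v) = s(u, v) := by
  cases u with
  | inl a =>
    cases v with
    | inl a' => simp at h
    | inr b => rfl
  | inr b =>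
    cases v with
    | inl a => exact Sym2.eq_swap
    | inr b' => simp at h

variable {k : ℕ}

def snocArc (A : (KG).Arc (k + 1)) (v : Fin n ⊕ Fin m)
    (h1 : v.isLeft ≠ (A.verts ⟨k + 1, by omega⟩).isLeft)
    (h2 : v ≠ A.verts ⟨k, by omega⟩) : (KG).Arc (k + 2) where
  verts j := if h : (j : ℕ) < k + 2 then A.verts ⟨j, h⟩ else v
  edges j := if h : (j : ℕ) < k + 1 then A.edges ⟨j, h⟩
    else mkEdge (A.verts ⟨k + 1, by omega⟩) v
  inc_eq i := by
    beta_reduce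
    rcases Nat.lt_or_ge (i : ℕ) (k + 1) with hi | hi
    · have hc : ((i.castSucc : Fin (k + 3)) : ℕ) < k + 2 := by
        simp only [Fin.coe_castSucc]; omega
      have hs : ((i.succ : Fin (k + 3)) : ℕ) < k + 2 := by
        simp only [Fin.val_succ]; omega
      rw [dif_pos hi, dif_pos hc, dif_pos hs]
      exact inc_eq' A (i : ℕ) hi
    · have hi' : (i : ℕ) = k + 1 := by omega
      have hc : ((i.castSucc : Fin (k + 3)) : ℕ) < k + 2 := by
        simp only [Fin.coe_castSucc]; omega
      have hs : ¬ ((i.succ : Fin (k + 3)) : ℕ) < k + 2 := by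
        simp only [Fin.val_succ]; omega
      rw [dif_neg (by omega), dif_pos hc, dif_neg hs]
      rw [inc_mkEdge _ _ (Ne.symm h1)]
      have : (⟨((i.castSucc : Fin (k + 3)) : ℕ), hc⟩ : Fin (k + 2)) = ⟨k + 1, by omega⟩ := by
        ext; simp only [Fin.coe_castSucc]; omega
      rw [this]
  nb i j hij heq := by
    beta_reduce at heq ⊢
    rcases Nat.lt_or_ge (j : ℕ) (k + 1) with hj | hj
    · have hi : (i : ℕ) < k + 1 := by omega
      rw [dif_pos hi, dif_pos hj] at heq
      have hjj : (⟨(j : ℕ), hj⟩ : Fin (k + 1)) = ⟨(i : ℕ) + 1, by omega⟩ := by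
        ext; simp; omega
      rw [hjj] at heq
      exact nb' A (i : ℕ) (by omega) heq
    · have hj' : (j : ℕ) = k + 1 := by have := j.isLt; omega
      have hi : (i : ℕ) < k + 1 := by omega
      rw [dif_pos hi, dif_neg (by omega)] at heq
      have hiv : (⟨(i : ℕ), hi⟩ : Fin (k + 1)) = ⟨k, by omega⟩ := by
        ext; simp; omega
      rw [hiv] at heq
      have e1 := inc_eq' A k (show k < k + 1 by omega)
      have e2 := inc_mkEdge (A.verts ⟨k + 1, by omega⟩) v (Ne.symm h1)
      rw [heq, e2] at e1
      rw [Sym2.eq_iff] at e1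
      rcases e1 with ⟨ha, _⟩ | ⟨_, hb⟩
      · have hside := side_adj A k (by omega)
        have := congrArg Sum.isLeft ha
        rw [hside] at this
        simp [-Sum.bnot_isLeft] at this
      · exact h2 hb

lemma init_snocArc (A : (KG).Arc (k + 1)) (v : Fin n ⊕ Fin m) (h1 : _) (h2 : _) :
    (snocArc A v h1 h2).init = A := by
  refine Multigraph.Arc.ext (funext fun i => ?_) (funext fun i => ?_)
  · show (if h : ((i.castSucc : Fin (k + 3)) : ℕ) < k + 2 then A.verts ⟨_, h⟩ else v)
      = A.verts i
    have hc : ((i.castSucc : Fin (k + 3)) : ℕ) < k + 2 := by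
      simp only [Fin.coe_castSucc]; omega
    rw [dif_pos hc]
    congr 1
  · show (if h : ((i.castSucc : Fin (k + 2)) : ℕ) < k + 1 then A.edges ⟨_, h⟩
        else mkEdge (A.verts ⟨k + 1, by omega⟩) v) = A.edges i
    have hc : ((i.castSucc : Fin (k + 2)) : ℕ) < k + 1 := by
      simp only [Fin.coe_castSucc]; omega
    rw [dif_pos hc]
    congr 1

abbrev ExtT (A : (KG).Arc (k + 1)) : Type :=
  {v : Fin n ⊕ Fin m // v.isLeft ≠ (A.verts ⟨k + 1, by omega⟩).isLeft
    ∧ v ≠ A.verts ⟨k, by omega⟩}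

def extFiberEquiv (A : (KG).Arc (k + 1)) :
    {B : (KG).Arc (k + 2) // B.init = A} ≃ ExtT A where
  toFun B := ⟨B.1.verts ⟨k + 2, by omega⟩, by
    obtain ⟨B, hB⟩ := B
    subst hB
    constructor
    · rw [init_verts' B (k + 1) (by omega), side_adj B (k + 1) (by omega)]
      simp [-Sum.bnot_isLeft]
    · rw [init_verts' B k (by omega)]
      exact (verts_ne B k (by omega)).symm⟩
  invFun v := ⟨snocArc A v.1 v.2.1 v.2.2, init_snocArc A v.1 v.2.1 v.2.2⟩
  left_inv B := by
    obtain ⟨B, hB⟩ := B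
    subst hB
    apply Subtype.ext
    refine Multigraph.Arc.ext (funext fun i => ?_) (funext fun i => ?_)
    · show (if h : (i : ℕ) < k + 2 then B.init.verts ⟨i, h⟩ else B.verts ⟨k + 2, by omega⟩)
        = B.verts i
      by_cases h : (i : ℕ) < k + 2
      · rw [dif_pos h, init_verts' B (i : ℕ) h]
      · rw [dif_neg h]
        congr 1
        ext
        simp
        omega
    · show (if h : (i : ℕ) < k + 1 then B.init.edges ⟨i, h⟩
          else mkEdge (B.init.verts ⟨k + 1, by omega⟩) (B.verts ⟨k + 2, by omega⟩))
        = B.edges i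
      by_cases h : (i : ℕ) < k + 1
      · rw [dif_pos h, init_edges' B (i : ℕ) h]
      · rw [dif_neg h]
        have hiv : i = ⟨k + 1, by omega⟩ := by ext; simp; omega
        rw [hiv, init_verts' B (k + 1) (by omega)]
        apply KB_inc_inj
        rw [inc_mkEdge _ _ (by rw [side_adj B (k + 1) (by omega)]; simp [-Sum.bnot_isLeft])]
        rw [inc_eq' B (k + 1) (by omega)]
  right_inv v := by
    apply Subtype.ext
    show (if h : (k + 2) < k + 2 then A.verts ⟨k + 2, h⟩ else v.1) = v.1
    rw [dif_neg (by omega)]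

lemma card_side_left (w : Fin n ⊕ Fin m) (hw : w.isLeft = true) :
    Nat.card {v : Fin n ⊕ Fin m // v.isLeft = true ∧ v ≠ w} = n - 1 := by
  obtain ⟨a, rfl⟩ : ∃ a, w = inl a := by
    cases w with
    | inl a => exact ⟨a, rfl⟩
    | inr b => simp at hw
  have hbij : Function.Bijective
      (fun x : {x : Fin n // ¬ x = a} =>
        (⟨inl x.1, by simp [x.2]⟩ : {v : Fin n ⊕ Fin m // v.isLeft = true ∧ v ≠ inl a})) := by
    constructor
    · intro x y h
      apply Subtype.ext
      have := congrArg Subtype.val h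
      simpa using this
    · rintro ⟨v, hv1, hv2⟩
      cases v with
      | inl x => exact ⟨⟨x, by simpa using hv2⟩, rfl⟩
      | inr b => simp at hv1
  rw [← Nat.card_eq_of_bijective _ hbij]
  classical
  rw [Nat.card_eq_fintype_card, Fintype.card_subtype_compl, Fintype.card_subtype_eq,
    Fintype.card_fin]

lemma card_side_right (w : Fin n ⊕ Fin m) (hw : w.isLeft = false) :
    Nat.card {v : Fin n ⊕ Fin m // v.isLeft = false ∧ v ≠ w} = m - 1 := by
  obtain ⟨b, rfl⟩ : ∃ b, w = inr b := by
    cases w with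
    | inl a => simp at hw
    | inr b => exact ⟨b, rfl⟩
  have hbij : Function.Bijective
      (fun x : {x : Fin m // ¬ x = b} =>
        (⟨inr x.1, by simp [x.2]⟩ : {v : Fin n ⊕ Fin m // v.isLeft = false ∧ v ≠ inr b})) := by
    constructor
    · intro x y h
      apply Subtype.ext
      have := congrArg Subtype.val h
      simpa using this
    · rintro ⟨v, hv1, hv2⟩
      cases v with
      | inl a => simp at hv1
      | inr x => exact ⟨⟨x, by simpa using hv2⟩, rfl⟩
  rw [← Nat.card_eq_of_bijective _ hbij]
  classical
  rw [Nat.card_eq_fintype_card, Fintype.card_subtype_compl, Fintype.card_subtype_eq,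
    Fintype.card_fin]

lemma card_extT (A : (KG).Arc (k + 1)) :
    Nat.card (ExtT A) = (if (A.verts ⟨k + 1, by omega⟩).isLeft then m else n) - 1 := by
  have hadj : (A.verts ⟨k + 1, by omega⟩).isLeft = !(A.verts ⟨k, by omega⟩).isLeft :=
    side_adj A k (by omega)
  cases hb : (A.verts ⟨k + 1, by omega⟩).isLeft with
  | true =>
    have hw : (A.verts ⟨k, by omega⟩).isLeft = false := by
      rw [hb] at hadj; simpa using hadj.symm
    have e : ExtT A ≃ {v : Fin n ⊕ Fin m // v.isLeft = false ∧ v ≠ A.verts ⟨k, by omega⟩} :=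
      Equiv.subtypeEquivRight (fun v => by rw [hb]; simp)
    rw [Nat.card_congr e, card_side_right _ hw]
    simp
  | false =>
    have hw : (A.verts ⟨k, by omega⟩).isLeft = true := by
      rw [hb] at hadj; simpa using hadj.symm
    have e : ExtT A ≃ {v : Fin n ⊕ Fin m // v.isLeft = true ∧ v ≠ A.verts ⟨k, by omega⟩} :=
      Equiv.subtypeEquivRight (fun v => by rw [hb]; simp)
    rw [Nat.card_congr e, card_side_left _ hw]
    simp

end Ext

lemma not_even_odd (t : ℕ) : ¬ Even (2 * t + 1) := by
  have h2t : Even (2 * t) := ⟨t, two_mul t⟩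
  simp [Nat.even_add_one, h2t]

lemma card_fiber_const {α β : Type} [Finite α] [Finite β] (f : α → β) (c : ℕ)
    (h : ∀ b : β, Nat.card {a : α // f a = b} = c) : Nat.card α = Nat.card β * c := by
  classical
  cases nonempty_fintype α
  cases nonempty_fintype β
  rw [← Nat.card_congr (Equiv.sigmaFiberEquiv f)]
  rw [Nat.card_eq_fintype_card, Nat.card_eq_fintype_card, Fintype.card_sigma]
  calc ∑ b : β, Fintype.card {a : α // f a = b} = ∑ _b : β, c :=
        Finset.sum_congr rfl (fun b _ => by rw [← Nat.card_eq_fintype_card, h b])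
    _ = Fintype.card β * c := by rw [Finset.sum_const, Finset.card_univ, smul_eq_mul]

section Count

variable [NeZero n] [NeZero m]

def arcOfEdge (s : Bool) (e : Fin n × Fin m) : (KG).Arc 1 where
  verts j := if (j : ℕ) = 0 then (if s then inl e.1 else inr e.2)
             else (if s then inr e.2 else inl e.1)
  edges _ := e
  inc_eq i := by
    have hi : (i : ℕ) = 0 := by have := i.isLt; omega
    beta_reduce
    rw [if_pos (show ((i.castSucc : Fin 2) : ℕ) = 0 by simp [hi]),
      if_neg (show ¬ ((i.succ : Fin 2) : ℕ) = 0 by simp)]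
    cases s with
    | true => rfl
    | false => exact Sym2.eq_swap
  nb i j hij := absurd hij (by have := j.isLt; omega)

lemma card_arc1 (s : Bool) :
    Nat.card {A : (KG).Arc 1 // (A.verts ⟨0, by omega⟩).isLeft = s} = n * m := by
  have hbij : Function.Bijective (fun e : Fin n × Fin m =>
      (⟨arcOfEdge s e, by cases s <;> rfl⟩ :
        {A : (KG).Arc 1 // (A.verts ⟨0, by omega⟩).isLeft = s})) := by
    constructor
    · intro e e' h
      have h2 := congrArg (fun A : {A : (KG).Arc 1 // (A.verts ⟨0, by omega⟩).isLeft = s}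
        => A.1.edges ⟨0, by omega⟩) h
      simpa [arcOfEdge] using h2
    · rintro ⟨A, hA⟩
      refine ⟨A.edges ⟨0, by omega⟩, Subtype.ext ?_⟩
      refine (Multigraph.Arc.ext (funext fun i => ?_) (funext fun i => ?_)).symm
      · rcases edge_ends A 0 (by omega) with ⟨h1, h2⟩ | ⟨h1, h2⟩
        · have hs : s = true := by rw [← hA, h1]; rfl
          subst hs
          show A.verts i = (if (i : ℕ) = 0 then inl (A.edges ⟨0, by omega⟩).1
            else inr (A.edges ⟨0, by omega⟩).2)
          by_cases hi : (i : ℕ) = 0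
          · rw [if_pos hi, show i = (⟨0, by omega⟩ : Fin 2) from Fin.ext hi]
            exact h1
          · rw [if_neg hi, show i = (⟨1, by omega⟩ : Fin 2) from
              (by apply Fin.ext; show (i : ℕ) = 1; have := i.isLt; omega)]
            exact h2
        · have hs : s = false := by rw [← hA, h1]; rfl
          subst hs
          show A.verts i = (if (i : ℕ) = 0 then inr (A.edges ⟨0, by omega⟩).2
            else inl (A.edges ⟨0, by omega⟩).1)
          by_cases hi : (i : ℕ) = 0
          · rw [if_pos hi, show i = (⟨0, by omega⟩ : Fin 2) from Fin.ext hi]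
            exact h1
          · rw [if_neg hi, show i = (⟨1, by omega⟩ : Fin 2) from
              (by apply Fin.ext; show (i : ℕ) = 1; have := i.isLt; omega)]
            exact h2
      · show A.edges i = A.edges ⟨0, by omega⟩
        rw [show i = (⟨0, by omega⟩ : Fin 1) from
          (by apply Fin.ext; show (i : ℕ) = 0; have := i.isLt; omega)]
  rw [← Nat.card_eq_of_bijective _ hbij, Nat.card_prod]
  simp [Nat.card_eq_fintype_card]

def initMap (k : ℕ) (s : Bool) :
    {B : (KG).Arc (k + 2) // (B.verts ⟨0, by omega⟩).isLeft = s} →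
    {A : (KG).Arc (k + 1) // (A.verts ⟨0, by omega⟩).isLeft = s} :=
  fun B => ⟨B.1.init, by rw [init_verts' B.1 0 (by omega)]; exact B.2⟩

lemma card_arc_succ (k : ℕ) (s : Bool) :
    Nat.card {B : (KG).Arc (k + 2) // (B.verts ⟨0, by omega⟩).isLeft = s}
      = Nat.card {A : (KG).Arc (k + 1) // (A.verts ⟨0, by omega⟩).isLeft = s}
        * ((if (if Even (k + 1) then s else !s) then m else n) - 1) := by
  refine card_fiber_const (initMap k s) _ (fun A => ?_)
  have e1 : {B // initMap k s B = A} ≃ {B : (KG).Arc (k + 2) // B.init = A.1} :=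
    { toFun := fun B => ⟨B.1.1, congrArg Subtype.val B.2⟩
      invFun := fun C => ⟨⟨C.1, by
        rw [← init_verts' C.1 0 (by omega), C.2]; exact A.2⟩, Subtype.ext C.2⟩
      left_inv := fun B => by apply Subtype.ext; apply Subtype.ext; rfl
      right_inv := fun C => by apply Subtype.ext; rfl }
  rw [Nat.card_congr e1, Nat.card_congr (extFiberEquiv A.1), card_extT A.1]
  have hp : (A.1.verts ⟨k + 1, by omega⟩).isLeft = (if Even (k + 1) then s else !s) := by
    rw [side_parity A.1 (k + 1) (by omega)]
    by_cases he : Even (k + 1)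
    · rw [if_pos he, if_pos he]; exact A.2
    · rw [if_neg he, if_neg he]; exact congrArg Bool.not A.2
  rw [hp]

lemma card_arc_start (t : ℕ) : ∀ s : Bool,
    Nat.card {A : (KG).Arc (2 * t + 1) // (A.verts ⟨0, by omega⟩).isLeft = s}
      = n * m * ((n - 1) * (m - 1)) ^ t := by
  induction t with
  | zero => intro s; rw [pow_zero, mul_one]; exact card_arc1 s
  | succ t ih =>
    intro s
    have e0 : Nat.card {A : (KG).Arc (2 * (t + 1) + 1) // (A.verts ⟨0, by omega⟩).isLeft = s}
        = Nat.card {B : (KG).Arc ((2 * t + 1) + 2) // (B.verts ⟨0, by omega⟩).isLeft = s} := rfl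
    have e1 : Nat.card {A : (KG).Arc ((2 * t + 1) + 1) // (A.verts ⟨0, by omega⟩).isLeft = s}
        = Nat.card {B : (KG).Arc (2 * t + 2) // (B.verts ⟨0, by omega⟩).isLeft = s} := rfl
    rw [e0, card_arc_succ (2 * t + 1) s, e1, card_arc_succ (2 * t) s, ih s]
    have h2t : Even (2 * t) := ⟨t, two_mul t⟩
    rw [if_neg (not_even_odd t), if_pos (by simpa [Nat.even_add_one] using not_even_odd t :
      Even (2 * t + 1 + 1))]
    cases s <;> simp <;> ring

lemma card_link (t : ℕ) :
    Nat.card ((KG).Link (2 * t + 1))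
      = Nat.card {A : (KG).Arc (2 * t + 1) // (A.verts ⟨0, by omega⟩).isLeft = true} := by
  refine (Nat.card_eq_of_bijective (fun A => Multigraph.Link.mk A.1) ⟨?_, ?_⟩).symm
  · intro A A' h
    rcases (link_mk_eq_mk_iff A.1 A'.1).mp h with h1 | h1
    · exact Subtype.ext h1
    · exfalso
      have h0 := A.2
      rw [h1, reverse_verts' A'.1 0 (by omega)] at h0
      simp only [Nat.sub_zero] at h0
      rw [side_parity A'.1 (2 * t + 1) (by omega), if_neg (not_even_odd t)] at h0
      have := A'.2
      rw [show (A'.1.verts ⟨0, Nat.succ_pos (2 * t + 1)⟩).isLeft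
        = (A'.1.verts ⟨0, by omega⟩).isLeft from rfl, this] at h0
      simp at h0
  · intro L
    obtain ⟨C, rfl⟩ := Quot.exists_rep L
    by_cases hC : (C.verts ⟨0, by omega⟩).isLeft = true
    · exact ⟨⟨C, hC⟩, rfl⟩
    · refine ⟨⟨C.reverse, ?_⟩, ?_⟩
      · rw [reverse_verts' C 0 (by omega)]
        simp only [Nat.sub_zero]
        rw [side_parity C (2 * t + 1) (by omega), if_neg (not_even_odd t)]
        have hC' : (C.verts ⟨0, Nat.succ_pos (2 * t + 1)⟩).isLeft = false := by
          have := hC; simp only [Bool.not_eq_true] at this; exact this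
        rw [hC']
        rfl
      · exact Multigraph.Link.mk_reverse C

lemma init_ne_tail (t : ℕ) (B : (KG).Arc (2 * t + 2)) :
    Multigraph.Link.mk B.init ≠ Multigraph.Link.mk B.tail := by
  intro h
  rcases (link_mk_eq_mk_iff _ _).mp h with h1 | h1
  · have h0 : (B.init.verts ⟨0, by omega⟩).isLeft = (B.tail.verts ⟨0, by omega⟩).isLeft := by
      rw [h1]
    rw [init_verts' B 0 (by omega), tail_verts' B 0 (by omega),
      side_adj B 0 (by omega)] at h0
    simp [-Sum.bnot_isLeft] at h0
  · have h0 : B.init.edges ⟨t, by omega⟩ = B.tail.reverse.edges ⟨t, by omega⟩ := by rw [h1]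
    rw [init_edges' B t (by omega), reverse_edges' B.tail t (by omega)] at h0
    simp only [show 2 * t + 1 - 1 - t = t from by omega] at h0
    rw [tail_edges' B t (by omega)] at h0
    exact nb' B t (by omega) h0

lemma degree_eq (t : ℕ) (hn : 2 ≤ n) (hm : 2 ≤ m) (A : (KG).Arc (2 * t + 1)) :
    ((KG).linkGraph (2 * t + 1)).degree (Multigraph.Link.mk A) = n + m - 2 := by
  show Nat.card {M : (KG).Link (2 * t + 1 + 1) //
      Multigraph.Link.mk A ∈ (KG).linkEnds M} = n + m - 2
  have hbij : Function.Bijective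
      (fun B : {B : (KG).Arc (2 * t + 2) //
          Multigraph.Link.mk B.init = Multigraph.Link.mk A} =>
        (⟨Multigraph.Link.mk B.1, by
          rw [show (KG).linkEnds (Multigraph.Link.mk B.1)
            = s(Multigraph.Link.mk B.1.init, Multigraph.Link.mk B.1.tail) from rfl,
            Sym2.mem_iff]
          left
          exact B.2.symm⟩ :
          {M : (KG).Link (2 * t + 1 + 1) // Multigraph.Link.mk A ∈ (KG).linkEnds M})) := by
    constructor
    · intro B B' h
      have h' : Multigraph.Link.mk B.1 = Multigraph.Link.mk B'.1 := congrArg Subtype.val h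
      rcases (link_mk_eq_mk_iff _ _).mp h' with h1 | h1
      · exact Subtype.ext h1
      · exfalso
        have h2 : B.1.init = B'.1.tail.reverse := by
          rw [h1]; exact Multigraph.Arc.reverse_init B'.1
        have h3 : Multigraph.Link.mk B'.1.tail = Multigraph.Link.mk A := by
          rw [← Multigraph.Link.mk_reverse B'.1.tail, ← h2]; exact B.2
        exact init_ne_tail t B'.1 (B'.2.trans h3.symm)
    · rintro ⟨M, hM⟩
      obtain ⟨C, rfl⟩ := Quot.exists_rep M
      rw [show (KG).linkEnds (Quot.mk _ C)
        = s(Multigraph.Link.mk C.init, Multigraph.Link.mk C.tail) from rfl,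
        Sym2.mem_iff] at hM
      rcases hM with h1 | h1
      · exact ⟨⟨C, h1.symm⟩, rfl⟩
      · refine ⟨⟨C.reverse, ?_⟩, ?_⟩
        · rw [Multigraph.Arc.reverse_init, Multigraph.Link.mk_reverse]; exact h1.symm
        · apply Subtype.ext
          exact Multigraph.Link.mk_reverse C
  rw [← Nat.card_eq_of_bijective _ hbij]
  have hAner : A ≠ A.reverse := by
    intro h
    have h0 : (A.verts ⟨0, by omega⟩).isLeft = (A.reverse.verts ⟨0, by omega⟩).isLeft := by
      rw [← h]
    rw [reverse_verts' A 0 (by omega)] at h0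
    simp only [Nat.sub_zero] at h0
    rw [side_parity A (2 * t + 1) (by omega), if_neg (not_even_odd t)] at h0
    simp [-Sum.bnot_isLeft] at h0
  have e2 : {B : (KG).Arc (2 * t + 2) // Multigraph.Link.mk B.init = Multigraph.Link.mk A}
      ≃ {B : (KG).Arc (2 * t + 2) // B.init = A ∨ B.init = A.reverse} :=
    Equiv.subtypeEquivRight (fun B => link_mk_eq_mk_iff B.init A)
  have hbij2 : Function.Bijective
      (fun x : {B : (KG).Arc (2 * t + 2) // B.init = A}
          ⊕ {B : (KG).Arc (2 * t + 2) // B.init = A.reverse} =>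
        (Sum.elim (fun B => ⟨B.1, Or.inl B.2⟩) (fun B => ⟨B.1, Or.inr B.2⟩) x :
          {B : (KG).Arc (2 * t + 2) // B.init = A ∨ B.init = A.reverse})) := by
    constructor
    · rintro (B | B) (B' | B') h <;> simp only [Sum.elim_inl, Sum.elim_inr] at h <;>
        have hv : (B.1 : (KG).Arc (2 * t + 2)) = B'.1 :=
          congrArg (fun z : {C : (KG).Arc (2 * t + 2) //
            C.init = A ∨ C.init = A.reverse} => z.1) h
      · exact congrArg Sum.inl (Subtype.ext hv)
      · exact absurd (B.2.symm.trans (by rw [hv]; exact B'.2)) hAner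
      · exact absurd (B'.2.symm.trans (by rw [← hv]; exact B.2)).symm
          (fun hh => hAner hh.symm)
      · exact congrArg Sum.inr (Subtype.ext hv)
    · rintro ⟨B, (h | h)⟩
      · exact ⟨Sum.inl ⟨B, h⟩, rfl⟩
      · exact ⟨Sum.inr ⟨B, h⟩, rfl⟩
  rw [Nat.card_congr e2, ← Nat.card_eq_of_bijective _ hbij2, Nat.card_sum,
    Nat.card_congr (extFiberEquiv A), Nat.card_congr (extFiberEquiv A.reverse),
    card_extT A, card_extT A.reverse]
  obtain ⟨b, hb⟩ : ∃ b, (A.verts ⟨0, by omega⟩).isLeft = b := ⟨_, rfl⟩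
  have hlast : (A.verts ⟨2 * t + 1, by omega⟩).isLeft = !b := by
    rw [side_parity A (2 * t + 1) (by omega), if_neg (not_even_odd t)]
    exact congrArg Bool.not hb
  have hrev : (A.reverse.verts ⟨2 * t + 1, by omega⟩).isLeft = b := by
    rw [reverse_verts' A (2 * t + 1) (by omega)]
    simp only [Nat.sub_self]
    exact hb
  rw [hlast, hrev]
  cases b <;> simp <;> omega

end Count

end CBAux

/-- For `n, m ≥ 2` and odd `ℓ ≥ 1`, the number of `ℓ`-links of `K_{n,m}`
is `n m ((n-1)(m-1))^((ℓ-1)/2)`, and each `ℓ`-link lies in exactly `n+m-2` of the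
`(ℓ+1)`-links, i.e. the `ℓ`-link graph of `K_{n,m}` is `(n+m-2)`-regular. -/
theorem link_count_completeBipartite (n m ℓ : ℕ) (hn : 2 ≤ n) (hm : 2 ≤ m) (hodd : Odd ℓ) :
    Nat.card ((Multigraph.completeBipartiteMG n m).Link ℓ)
      = n * m * ((n - 1) * (m - 1)) ^ ((ℓ - 1) / 2) ∧
    ∀ L : (Multigraph.completeBipartiteMG n m).Link ℓ,
      ((Multigraph.completeBipartiteMG n m).linkGraph ℓ).degree L = n + m - 2 := by
  haveI : NeZero n := ⟨by omega⟩
  haveI : NeZero m := ⟨by omega⟩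
  obtain ⟨t, rfl⟩ := hodd
  constructor
  · rw [show (2 * t + 1 - 1) / 2 = t from by omega]
    rw [card_link t, card_arc_start t true]
  · intro L
    obtain ⟨A, rfl⟩ := Quot.exists_rep L
    exact degree_eq t hn hm A
end

section
/- Let G be a finite loopless multigraph with edge-chromatic number χ′ and let ℓ ≥ 1 be odd. Then χ(L_ℓ(G)) ≤ min{χ′, ⌊(2/3)^{(ℓ−1)/2}(χ′−3)⌋ + 3}. -/
namespace Multigraph

variable {V E : Type} {G : Multigraph V E}

/-- The merging function: from colours `< n + 3` to colours `< 2*n/3 + 3`. -/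
def pick2 (a c : ℕ) : ℕ := if a ≠ 0 ∧ c ≠ 0 then 0 else if a ≠ 1 ∧ c ≠ 1 then 1 else 2

def stepF (n a b c : ℕ) : ℕ :=
  if b < 3 then b
  else
    if (b - 3) / 3 < n / 3 then
      if (b - 3) % 3 = 0 then 3 + 2 * ((b - 3) / 3)
      else if (b - 3) % 3 = 1 then 4 + 2 * ((b - 3) / 3)
      else
        if (a = b - 2 ∨ c = b - 2) ∧ (a = b - 1 ∨ c = b - 1) then 0
        else if a = b - 2 ∨ c = b - 2 then 4 + 2 * ((b - 3) / 3)
        else 3 + 2 * ((b - 3) / 3)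
    else
      if n % 3 = 1 then pick2 a c
      else
        if (b - 3) % 3 = 0 then 3 + 2 * (n / 3)
        else if a = b - 1 ∨ c = b - 1 then pick2 a c else 3 + 2 * (n / 3)

lemma stepF_symm (n a b c : ℕ) : stepF n a b c = stepF n c b a := by
  unfold stepF pick2
  split_ifs <;> omega

lemma stepF_lt (n a b c : ℕ) (hb : b < n + 3) : stepF n a b c < 2 * n / 3 + 3 := by
  unfold stepF pick2
  split_ifs <;> omega

set_option maxHeartbeats 4000000 in
lemma stepF_ne (n a b c d : ℕ) (ha : a < n + 3) (hb : b < n + 3) (hc : c < n + 3)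
    (hd : d < n + 3) (hab : a ≠ b) (hbc : b ≠ c) (hcd : c ≠ d) :
    stepF n a b c ≠ stepF n b c d := by
  unfold stepF pick2
  split_ifs <;> omega

lemma link_mk_cases {ℓ : ℕ} (A B : G.Arc ℓ) (h : Link.mk A = Link.mk B) :
    B = A ∨ B = A.reverse := by
  let P : G.Link ℓ → Prop := Quot.lift (fun C : G.Arc ℓ => (C = A ∨ C = A.reverse : Prop))
    (fun X Y hXY => by
      have hXY' : Y = X.reverse := hXY
      subst hXY'
      apply propext
      constructor
      · rintro (rfl | rfl)
        · exact Or.inr rfl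
        · exact Or.inl (Arc.reverse_reverse A)
      · rintro (h1 | h2)
        · exact Or.inr (by rw [← h1, Arc.reverse_reverse])
        · exact Or.inl (by
            have h3 := congrArg Arc.reverse h2
            rwa [Arc.reverse_reverse, Arc.reverse_reverse] at h3))
  have hA : P (Link.mk A) := Or.inl rfl
  have hB : P (Link.mk B) := h ▸ hA
  exact hB

/-- For odd length, the two ends of an `(ℓ+1)`-link are distinct `ℓ`-links. -/
lemma mk_init_ne_mk_tail {k : ℕ} (S : G.Arc (2 * k + 1 + 1)) :
    Link.mk S.init ≠ Link.mk S.tail := by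
  intro h
  rcases link_mk_cases _ _ h with h' | h'
  · have h0 := congrFun (congrArg Arc.edges h') ⟨0, by omega⟩
    have h1 : S.tail.edges ⟨0, by omega⟩ = S.edges ⟨1, by omega⟩ := by
      show S.edges (Fin.succ _) = _
      congr 1
    have h2 : S.init.edges ⟨0, by omega⟩ = S.edges ⟨0, by omega⟩ := by
      show S.edges (Fin.castSucc _) = _
      congr 1
    exact S.nb ⟨0, by omega⟩ ⟨1, by omega⟩ rfl (by rw [← h2, ← h1, h0])
  · have h0 := congrFun (congrArg Arc.edges h') ⟨k, by omega⟩
    have h1 : S.tail.edges ⟨k, by omega⟩ = S.edges ⟨k + 1, by omega⟩ := by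
      show S.edges (Fin.succ _) = _
      congr 1
    have h2 : S.init.reverse.edges ⟨k, by omega⟩ = S.edges ⟨k, by omega⟩ := by
      show S.edges (Fin.castSucc (Fin.rev _)) = _
      congr 1
      ext
      simp [Fin.val_rev]
      omega
    exact S.nb ⟨k, by omega⟩ ⟨k + 1, by omega⟩ rfl (by rw [← h2, ← h0, h1])

lemma adj_init_tail {k : ℕ} (S : G.Arc (2 * k + 1 + 1)) :
    ((G.linkGraph (2 * k + 1)).toSimple).Adj (Link.mk S.init) (Link.mk S.tail) :=
  ⟨mk_init_ne_mk_tail S, ⟨Link.mk S, rfl⟩⟩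

lemma adj_elim {ℓ : ℕ} {L1 L2 : G.Link ℓ} (h : ((G.linkGraph ℓ).toSimple).Adj L1 L2) :
    ∃ R : G.Arc (ℓ + 1), (L1 = Link.mk R.init ∧ L2 = Link.mk R.tail) ∨
      (L1 = Link.mk R.tail ∧ L2 = Link.mk R.init) := by
  obtain ⟨-, Q, hQ⟩ := h
  obtain ⟨R, rfl⟩ := Quot.exists_rep Q
  refine ⟨R, ?_⟩
  have h2 : s(Link.mk R.init, Link.mk R.tail) = s(L1, L2) := hQ
  rw [Sym2.eq_iff] at h2
  tauto

/-- Colouring `ℓ`-links by the colour of their middle edge, for odd `ℓ`. -/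
lemma exists_mid_coloring {k : ℕ} (c : E → ℕ) (t : ℕ) (hlt : ∀ e, c e < t)
    (hp : ∀ e f : E, e ≠ f → (∃ v, v ∈ G.inc e ∧ v ∈ G.inc f) → c e ≠ c f) :
    ∃ φ : G.Link (2 * k + 1) → ℕ, (∀ L, φ L < t) ∧
      ∀ L1 L2, ((G.linkGraph (2 * k + 1)).toSimple).Adj L1 L2 → φ L1 ≠ φ L2 := by
  have hrev : ∀ A : G.Arc (2 * k + 1),
      A.reverse.edges ⟨k, by omega⟩ = A.edges ⟨k, by omega⟩ := by
    intro A
    show A.edges (Fin.rev _) = _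
    congr 1
    ext
    simp [Fin.val_rev]
    omega
  refine ⟨Quot.lift (fun A : G.Arc (2 * k + 1) => c (A.edges ⟨k, by omega⟩)) ?_, ?_, ?_⟩
  · intro A B hAB
    have hAB' : B = A.reverse := hAB
    subst hAB'
    show c (A.edges ⟨k, by omega⟩) = c (A.reverse.edges ⟨k, by omega⟩)
    rw [hrev]
  · intro L
    induction L using Quot.ind with
    | _ A => exact hlt _
  · intro L1 L2 hadj
    obtain ⟨R, hR⟩ := adj_elim hadj
    have key : c (R.init.edges ⟨k, by omega⟩) ≠ c (R.tail.edges ⟨k, by omega⟩) := by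
      have e1 : R.init.edges ⟨k, by omega⟩ = R.edges ⟨k, by omega⟩ := by
        show R.edges (Fin.castSucc _) = _
        congr 1
      have e2 : R.tail.edges ⟨k, by omega⟩ = R.edges ⟨k + 1, by omega⟩ := by
        show R.edges (Fin.succ _) = _
        congr 1
      rw [e1, e2]
      refine hp _ _ (R.nb ⟨k, by omega⟩ ⟨k + 1, by omega⟩ rfl) ?_
      refine ⟨R.verts ⟨k + 1, by omega⟩, ?_, ?_⟩
      · have h3 := R.inc_eq ⟨k, by omega⟩
        rw [h3, Sym2.mem_iff]
        right
        show _ = R.verts (Fin.succ _)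
        congr 1
      · have h3 := R.inc_eq ⟨k + 1, by omega⟩
        rw [h3, Sym2.mem_iff]
        left
        show _ = R.verts (Fin.castSucc _)
        congr 1
    rcases hR with ⟨rfl, rfl⟩ | ⟨rfl, rfl⟩
    · exact key
    · exact key.symm

/-- The induction step: a proper colouring of the `(2k+1)`-link graph with `n + 3`
colours yields one of the `(2k+3)`-link graph with `2*n/3 + 3` colours. -/
lemma step_coloring {k n : ℕ} (φ : G.Link (2 * k + 1) → ℕ) (hlt : ∀ L, φ L < n + 3)
    (hp : ∀ L1 L2, ((G.linkGraph (2 * k + 1)).toSimple).Adj L1 L2 → φ L1 ≠ φ L2) :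
    ∃ ψ : G.Link (2 * k + 1 + 2) → ℕ, (∀ L, ψ L < 2 * n / 3 + 3) ∧
      ∀ L1 L2, ((G.linkGraph (2 * k + 1 + 2)).toSimple).Adj L1 L2 → ψ L1 ≠ ψ L2 := by
  refine ⟨Quot.lift (fun A : G.Arc (2 * k + 1 + 2) =>
      stepF n (φ (Link.mk A.init.init)) (φ (Link.mk A.tail.init))
        (φ (Link.mk A.tail.tail))) ?_, ?_, ?_⟩
  · intro A B hAB
    have hAB' : B = A.reverse := hAB
    subst hAB'
    show stepF n (φ (Link.mk A.init.init)) (φ (Link.mk A.tail.init))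
        (φ (Link.mk A.tail.tail))
      = stepF n (φ (Link.mk A.reverse.init.init)) (φ (Link.mk A.reverse.tail.init))
        (φ (Link.mk A.reverse.tail.tail))
    have e1 : A.reverse.init.init = A.tail.tail.reverse := by
      rw [Arc.reverse_init, Arc.reverse_init]
    have e2 : A.reverse.tail.init = A.init.tail.reverse := by
      rw [Arc.reverse_tail, Arc.reverse_init]
    have e3 : A.reverse.tail.tail = A.init.init.reverse := by
      rw [Arc.reverse_tail, Arc.reverse_tail]
    rw [e1, e2, e3, Link.mk_reverse, Link.mk_reverse, Link.mk_reverse,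
      Arc.tail_init_comm, stepF_symm]
  · intro L
    induction L using Quot.ind with
    | _ A => exact stepF_lt _ _ _ _ (hlt _)
  · have key : ∀ R : G.Arc (2 * k + 1 + 2 + 1),
        stepF n (φ (Link.mk R.init.init.init)) (φ (Link.mk R.init.tail.init))
          (φ (Link.mk R.init.tail.tail))
        ≠ stepF n (φ (Link.mk R.tail.init.init)) (φ (Link.mk R.tail.tail.init))
          (φ (Link.mk R.tail.tail.tail)) := by
      intro R
      have e1 : R.init.tail.init = R.init.init.tail := Arc.tail_init_comm R.init
      have e2 : R.tail.init.init = R.init.tail.init := congrArg Arc.init (Arc.tail_init_comm R)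
      have e3 : R.tail.tail.init = R.init.tail.tail := by
        rw [Arc.tail_init_comm R.tail, Arc.tail_init_comm R]
      have e4 : R.tail.tail.init = R.tail.init.tail := Arc.tail_init_comm R.tail
      -- the four consecutive (2k+1)-sublinks and their adjacencies
      have h01 := hp _ _ (adj_init_tail R.init.init)
      have h12 := hp _ _ (adj_init_tail R.init.tail)
      have h23 := hp _ _ (adj_init_tail R.tail.tail)
      rw [e2, e3]
      rw [e1] at h12 ⊢
      rw [e3] at h23
      exact stepF_ne n _ _ _ _ (hlt _) (hlt _) (hlt _) (hlt _) h01 h12 h23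
    intro L1 L2 hadj
    obtain ⟨R, hR⟩ := adj_elim hadj
    rcases hR with ⟨rfl, rfl⟩ | ⟨rfl, rfl⟩
    · exact key R
    · exact (key R).symm

end Multigraph

/-- For a finite loopless multigraph `G` with edge-chromatic number `c'`
and odd `ℓ ≥ 1`, `χ(L_ℓ(G)) ≤ min {c', ⌊(2/3)^((ℓ-1)/2) (c'-3)⌋ + 3}`. -/
theorem chromatic_linkGraph_odd {V E : Type} [Finite V] [Finite E] (G : Multigraph V E)
    (hG : G.Loopless) (ℓ : ℕ) (hodd : Odd ℓ) (c' : ℕ)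
    (hc' : G.edgeChromaticNumber = c') :
    ((G.linkGraph ℓ).toSimple).chromaticNumber
      ≤ ((min c' (2 ^ ((ℓ - 1) / 2) * (c' - 3) / 3 ^ ((ℓ - 1) / 2) + 3) : ℕ) : ℕ∞) := by
  classical
  -- a proper edge colouring with `c'` colours exists
  have hSne : {t | ∃ cc : E → Fin t, ∀ e f : E, e ≠ f →
      (∃ v, v ∈ G.inc e ∧ v ∈ G.inc f) → cc e ≠ cc f}.Nonempty := by
    obtain ⟨n, ⟨eqv⟩⟩ := Finite.exists_equiv_fin E
    exact ⟨n, eqv, fun e f hef _ h => hef (eqv.injective h)⟩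
  have hmem : G.edgeChromaticNumber ∈ {t | ∃ cc : E → Fin t, ∀ e f : E, e ≠ f →
      (∃ v, v ∈ G.inc e ∧ v ∈ G.inc f) → cc e ≠ cc f} := Nat.sInf_mem hSne
  rw [hc'] at hmem
  obtain ⟨cc, hcc⟩ := hmem
  set cN : E → ℕ := fun e => (cc e : ℕ) with hcN
  have hltN : ∀ e, cN e < c' := fun e => (cc e).isLt
  have hpN : ∀ e f : E, e ≠ f → (∃ v, v ∈ G.inc e ∧ v ∈ G.inc f) → cN e ≠ cN f :=
    fun e f hef hv h => hcc e f hef hv (Fin.ext h)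
  obtain ⟨k, rfl⟩ := hodd
  have hk : (2 * k + 1 - 1) / 2 = k := by omega
  rw [hk]
  -- bound by `c'` via the middle-edge colouring
  obtain ⟨φ1, b1, p1⟩ := Multigraph.exists_mid_coloring (G := G) (k := k) cN c' hltN hpN
  have col1 : ((G.linkGraph (2 * k + 1)).toSimple).Colorable c' :=
    ⟨SimpleGraph.Coloring.mk (fun L => ⟨φ1 L, b1 L⟩)
      (fun hadj h => p1 _ _ hadj (congrArg Fin.val h))⟩
  -- bound by the decaying term, by induction
  have main : ∀ m : ℕ, ∃ φ : G.Link (2 * m + 1) → ℕ,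
      (∀ L, φ L < 2 ^ m * (c' - 3) / 3 ^ m + 3) ∧
      ∀ L1 L2, ((G.linkGraph (2 * m + 1)).toSimple).Adj L1 L2 → φ L1 ≠ φ L2 := by
    intro m
    induction m with
    | zero =>
        obtain ⟨φ, h1, h2⟩ := Multigraph.exists_mid_coloring (G := G) (k := 0) cN c' hltN hpN
        refine ⟨φ, fun L => ?_, h2⟩
        have h3 := h1 L
        simp only [pow_zero, one_mul, Nat.div_one]
        omega
    | succ m ih =>
        obtain ⟨φ, h1, h2⟩ := ih
        obtain ⟨ψ, g1, g2⟩ := Multigraph.step_coloring (n := 2 ^ m * (c' - 3) / 3 ^ m) φ h1 h2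
        have hlen : 2 * m + 1 + 2 = 2 * (m + 1) + 1 := by ring
        rw [← hlen]
        have harith : 2 * (2 ^ m * (c' - 3) / 3 ^ m) / 3
            ≤ 2 ^ (m + 1) * (c' - 3) / 3 ^ (m + 1) := by
          have h3 : 0 < (3 : ℕ) ^ m := Nat.pow_pos (by norm_num)
          have step1 : 2 * (2 ^ m * (c' - 3) / 3 ^ m) ≤ 2 * (2 ^ m * (c' - 3)) / 3 ^ m := by
            rw [Nat.le_div_iff_mul_le h3]
            calc 2 * (2 ^ m * (c' - 3) / 3 ^ m) * 3 ^ m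
                = 2 * (2 ^ m * (c' - 3) / 3 ^ m * 3 ^ m) := by ring
              _ ≤ 2 * (2 ^ m * (c' - 3)) := by
                  exact Nat.mul_le_mul_left 2 (Nat.div_mul_le_self _ _)
          calc 2 * (2 ^ m * (c' - 3) / 3 ^ m) / 3
              ≤ 2 * (2 ^ m * (c' - 3)) / 3 ^ m / 3 := Nat.div_le_div_right step1
            _ = 2 * (2 ^ m * (c' - 3)) / (3 ^ m * 3) := Nat.div_div_eq_div_mul _ _ _
            _ = 2 ^ (m + 1) * (c' - 3) / 3 ^ (m + 1) := by
                rw [pow_succ, pow_succ]; ring_nf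
        exact ⟨ψ, fun L => lt_of_lt_of_le (g1 L) (by omega), g2⟩
  obtain ⟨φ2, b2, p2⟩ := main k
  have col2 : ((G.linkGraph (2 * k + 1)).toSimple).Colorable
      (2 ^ k * (c' - 3) / 3 ^ k + 3) :=
    ⟨SimpleGraph.Coloring.mk (fun L => ⟨φ2 L, b2 L⟩)
      (fun hadj h => p2 _ _ hadj (congrArg Fin.val h))⟩
  rcases min_cases c' (2 ^ k * (c' - 3) / 3 ^ k + 3) with ⟨hmin, -⟩ | ⟨hmin, -⟩ <;> rw [hmin]
  · exact col1.chromaticNumber_le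
  · exact col2.chromaticNumber_le
end
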